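/- Let ξ = exp(2iπ/(nl)) and ν_℘ the (x-ξ)-adic valuation on ℂ(x). Let 1 ≤ d, d' ≤ l with d ≠ d', and a_1 = dn, a_3 = d'n, a_2, a_4 ∈ ℤ. Then for P(x) = ξ^{a_1} x^{a_2} - ξ^{a_3} x^{a_4}, one has ν_℘(P(x)) ≤ 1; moreover ν_℘(P(x)) = 1 if and only if a_1 + a_2 ≡ a_3 + a_4 (mod nl). -/

import Mathlib

open Polynomial

private lemma stmt15_zpow_eq_iff (ξ : ℂ) (hξ0 : ξ ≠ 0) (N : ℕ) (hξ : IsPrimitiveRoot ξ N)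
    (s t : ℤ) : ξ ^ s = ξ ^ t ↔ s ≡ t [ZMOD (N : ℤ)] := by
  rw [Int.modEq_iff_dvd, ← hξ.zpow_eq_one_iff_dvd, zpow_sub₀ hξ0,
    div_eq_one_iff_eq (zpow_ne_zero s hξ0), eq_comm]

private lemma stmt15_fact (α β : ℂ) (a₂ a₄ : ℤ) :
    RatFunc.C α * (RatFunc.X : RatFunc ℂ) ^ a₂ - RatFunc.C β * (RatFunc.X : RatFunc ℂ) ^ a₄ =
      (RatFunc.X : RatFunc ℂ) ^ (min a₂ a₄) *
        algebraMap (Polynomial ℂ) (RatFunc ℂ)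
          (C α * X ^ (a₂ - min a₂ a₄).toNat - C β * X ^ (a₄ - min a₂ a₄).toNat) := by
  have hX : (RatFunc.X : RatFunc ℂ) ≠ 0 := RatFunc.X_ne_zero
  rw [map_sub, map_mul, map_mul, map_pow, map_pow, RatFunc.algebraMap_C, RatFunc.algebraMap_C,
    RatFunc.algebraMap_X, mul_sub]
  rw [← zpow_natCast (RatFunc.X : RatFunc ℂ) (a₂ - min a₂ a₄).toNat,
    ← zpow_natCast (RatFunc.X : RatFunc ℂ) (a₄ - min a₂ a₄).toNat]
  rw [mul_left_comm, ← zpow_add₀ hX, mul_left_comm, ← zpow_add₀ hX,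
    Int.toNat_of_nonneg (by omega), Int.toNat_of_nonneg (by omega)]
  ring_nf

/-- For `ξ` a primitive `nl`-th root of unity, `℘ = (x - ξ)`, `1 ≤ d ≠ d' ≤ l`,
`a₁ = dn`, `a₃ = d'n` and `a₂, a₄ ∈ ℤ`, the `℘`-adic valuation of
`P = ξ^{a₁} x^{a₂} - ξ^{a₃} x^{a₄}` is at most `1` (multiplicatively: at least
`ofAdd (-1)`), and it equals `1` iff `a₁ + a₂ ≡ a₃ + a₄ (mod nl)`. -/
theorem stmt15 (n l : ℕ) (hn : 0 < n) (hl : 0 < l)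
    (ξ : ℂ) (hξ : IsPrimitiveRoot ξ (n * l))
    (v : IsDedekindDomain.HeightOneSpectrum (Polynomial ℂ))
    (hv : v.asIdeal = Ideal.span {Polynomial.X - Polynomial.C ξ})
    (d d' : ℕ) (hd1 : 1 ≤ d) (hdl : d ≤ l) (hd'1 : 1 ≤ d') (hd'l : d' ≤ l)
    (hne : d ≠ d') (a₂ a₄ : ℤ) :
    ((Multiplicative.ofAdd (-1 : ℤ) : Multiplicative ℤ) : WithZero (Multiplicative ℤ)) ≤
      v.valuation (RatFunc ℂ)
        (RatFunc.C (ξ ^ (d * n)) * (RatFunc.X : RatFunc ℂ) ^ a₂ -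
          RatFunc.C (ξ ^ (d' * n)) * (RatFunc.X : RatFunc ℂ) ^ a₄) ∧
    (v.valuation (RatFunc ℂ)
        (RatFunc.C (ξ ^ (d * n)) * (RatFunc.X : RatFunc ℂ) ^ a₂ -
          RatFunc.C (ξ ^ (d' * n)) * (RatFunc.X : RatFunc ℂ) ^ a₄) =
        ((Multiplicative.ofAdd (-1 : ℤ) : Multiplicative ℤ) : WithZero (Multiplicative ℤ)) ↔
      ((d : ℤ) * n + a₂) ≡ ((d' : ℤ) * n + a₄) [ZMOD ((n : ℤ) * l)]) := by
  have hN : 0 < n * l := Nat.mul_pos hn hl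
  have hξ0 : ξ ≠ 0 := hξ.ne_zero hN.ne'
  set m : ℤ := min a₂ a₄ with hm
  set b : ℕ := (a₂ - m).toNat with hb
  set c : ℕ := (a₄ - m).toNat with hc
  have hbm : (b : ℤ) = a₂ - m := Int.toNat_of_nonneg (by omega)
  have hcm : (c : ℤ) = a₄ - m := Int.toNat_of_nonneg (by omega)
  set α : ℂ := ξ ^ (d * n) with hα
  set β : ℂ := ξ ^ (d' * n) with hβ
  have hα0 : α ≠ 0 := pow_ne_zero _ hξ0
  have hβ0 : β ≠ 0 := pow_ne_zero _ hξ0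
  -- the congruence as an integer divisibility restatement
  have hcongr : ∀ s t : ℤ, ξ ^ s = ξ ^ t ↔ s ≡ t [ZMOD ((n * l : ℕ) : ℤ)] :=
    stmt15_zpow_eq_iff ξ hξ0 (n * l) hξ
  have hαβ : α ≠ β := by
    intro h
    rw [hα, hβ, ← zpow_natCast, ← zpow_natCast, hcongr] at h
    have hdvd : ((n * l : ℕ) : ℤ) ∣ ((d' * n : ℕ) : ℤ) - ((d * n : ℕ) : ℤ) :=
      Int.ModEq.dvd h
    have hdvd' : (l : ℤ) ∣ ((d' : ℤ) - d) := by
      have h1 : ((n : ℤ) * l) ∣ (n : ℤ) * ((d' : ℤ) - d) := by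
        convert hdvd using 1 <;> push_cast <;> ring
      exact (mul_dvd_mul_iff_left (by exact_mod_cast hn.ne' : (n : ℤ) ≠ 0)).mp h1
    have : ((d' : ℤ) - d) = 0 := by
      refine Int.eq_zero_of_abs_lt_dvd hdvd' ?_
      rw [abs_lt]
      constructor <;> omega
    exact hne (by omega)
  set Q : Polynomial ℂ := C α * X ^ b - C β * X ^ c with hQdef
  have hQ0 : Q ≠ 0 := by
    intro h
    rw [hQdef, sub_eq_zero] at h
    have hbc : b = c := by
      have := congrArg natDegree h
      rwa [natDegree_C_mul_X_pow _ _ hα0, natDegree_C_mul_X_pow _ _ hβ0] at this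
    rw [hbc] at h
    exact hαβ (C_inj.mp (mul_right_cancel₀ (pow_ne_zero c X_ne_zero) h))
  have hroot : eval ξ Q = α * ξ ^ b - β * ξ ^ c := by simp [hQdef]
  -- divisibility by (X - C ξ) is the congruence
  have hdvd1 : (X - C ξ) ∣ Q ↔
      ((d : ℤ) * n + a₂) ≡ ((d' : ℤ) * n + a₄) [ZMOD ((n : ℤ) * l)] := by
    rw [dvd_iff_isRoot, IsRoot, hroot, sub_eq_zero, hα, hβ,
      ← zpow_natCast ξ (d * n), ← zpow_natCast ξ (d' * n),
      ← zpow_natCast ξ b, ← zpow_natCast ξ c, ← zpow_add₀ hξ0, ← zpow_add₀ hξ0, hcongr,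
      Int.modEq_iff_dvd, Int.modEq_iff_dvd, hbm, hcm]
    constructor <;> intro h <;> [skip; skip] <;>
      · convert h using 1 <;> push_cast <;> ring
  -- (X - C ξ)^2 never divides Q
  have hmulξ : ∀ k : ℕ, (k : ℂ) * ξ ^ (k - 1) * ξ = (k : ℂ) * ξ ^ k := by
    intro k
    cases k with
    | zero => simp
    | succ k => rw [mul_assoc, ← pow_succ]; simp
  have hsq : ¬ (X - C ξ) ^ 2 ∣ Q := by
    intro hdvd
    have h1 : (X - C ξ) ∣ Q := (dvd_pow_self _ two_ne_zero).trans hdvd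
    have hQξ : α * ξ ^ b = β * ξ ^ c := by
      have := dvd_iff_isRoot.mp h1
      rw [IsRoot, hroot, sub_eq_zero] at this
      exact this
    have hder : (X - C ξ) ∣ derivative Q := by
      obtain ⟨R, hR⟩ := hdvd
      rw [hR, derivative_mul, derivative_pow]
      refine dvd_add (Dvd.dvd.mul_right ?_ R) (Dvd.dvd.mul_right (dvd_pow_self _ two_ne_zero) _)
      exact Dvd.dvd.mul_right (Dvd.dvd.mul_left (dvd_pow_self _ one_ne_zero) _) _
    have hQ'ξ : α * ((b : ℂ) * ξ ^ (b - 1)) - β * ((c : ℂ) * ξ ^ (c - 1)) = 0 := by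
      have := dvd_iff_isRoot.mp hder
      rw [IsRoot] at this
      simpa [hQdef, derivative_sub, derivative_C_mul, derivative_X_pow] using this
    have hkey : α * ((b : ℂ) * ξ ^ b) = β * ((c : ℂ) * ξ ^ c) := by
      have h5 := sub_eq_zero.mp hQ'ξ
      calc α * ((b : ℂ) * ξ ^ b) = α * ((b : ℂ) * ξ ^ (b - 1) * ξ) := by rw [hmulξ]
        _ = α * ((b : ℂ) * ξ ^ (b - 1)) * ξ := by ring
        _ = β * ((c : ℂ) * ξ ^ (c - 1)) * ξ := by rw [h5]
        _ = β * ((c : ℂ) * ξ ^ (c - 1) * ξ) := by ring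
        _ = β * ((c : ℂ) * ξ ^ c) := by rw [hmulξ]
    have hbc : (b : ℂ) = (c : ℂ) := by
      have h2 : β * ((c : ℂ) * ξ ^ c) = (c : ℂ) * (α * ξ ^ b) := by
        rw [hQξ]; ring
      have h3 : α * ξ ^ b * ((b : ℂ) - c) = 0 := by
        rw [mul_sub, sub_eq_zero]
        calc α * ξ ^ b * (b : ℂ) = α * ((b : ℂ) * ξ ^ b) := by ring
          _ = (c : ℂ) * (α * ξ ^ b) := by rw [hkey, h2]
          _ = α * ξ ^ b * c := by ring
      have h4 : (b : ℂ) - c = 0 :=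
        (mul_eq_zero.mp h3).resolve_left (mul_ne_zero hα0 (pow_ne_zero _ hξ0))
      linear_combination h4
    have hbc' : b = c := Nat.cast_injective hbc
    rw [hbc'] at hQξ
    exact hαβ (mul_right_cancel₀ (pow_ne_zero _ hξ0) hQξ)
  -- valuation plumbing
  have hW : ∀ N : ℕ, v.intValuation Q ≤ (Multiplicative.ofAdd (-(N : ℤ)) :
      Multiplicative ℤ) ↔ (X - C ξ) ^ N ∣ Q := by
    intro N
    change v.intValuation Q ≤ WithZero.exp (-(N : ℤ)) ↔ _
    rw [v.intValuation_le_pow_iff_dvd, hv, Ideal.span_singleton_pow,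
      span_singleton_dvd_span_singleton_iff_dvd]
  have hX : (RatFunc.X : RatFunc ℂ) ≠ 0 := RatFunc.X_ne_zero
  have hvX : v.valuation (RatFunc ℂ) (RatFunc.X : RatFunc ℂ) = 1 := by
    rw [← RatFunc.algebraMap_X, v.valuation_of_algebraMap]
    refine le_antisymm (v.intValuation_le_one X) (not_lt.mp ?_)
    rw [v.intValuation_lt_one_iff_dvd, hv, span_singleton_dvd_span_singleton_iff_dvd,
      dvd_iff_isRoot]
    simp [hξ0]
  have hfact : RatFunc.C α * (RatFunc.X : RatFunc ℂ) ^ a₂ -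
      RatFunc.C β * (RatFunc.X : RatFunc ℂ) ^ a₄ =
      (RatFunc.X : RatFunc ℂ) ^ m * algebraMap (Polynomial ℂ) (RatFunc ℂ) Q := by
    rw [hQdef]
    exact stmt15_fact α β a₂ a₄
  have hvP : v.valuation (RatFunc ℂ) (RatFunc.C α * (RatFunc.X : RatFunc ℂ) ^ a₂ -
      RatFunc.C β * (RatFunc.X : RatFunc ℂ) ^ a₄) = v.intValuation Q := by
    rw [hfact, map_mul, map_zpow₀, hvX, one_zpow, one_mul, v.valuation_of_algebraMap]
  have hne0 : v.intValuation Q ≠ 0 := by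
    rw [IsDedekindDomain.HeightOneSpectrum.intValuation_apply]
    exact v.intValuation_ne_zero Q hQ0
  have hne2 : ¬ v.intValuation Q ≤ ((Multiplicative.ofAdd (-2 : ℤ) : Multiplicative ℤ) :
      WithZero (Multiplicative ℤ)) := by
    intro h
    exact hsq ((hW 2).mp (by exact_mod_cast h))
  obtain ⟨u, hu⟩ := WithZero.ne_zero_iff_exists.mp hne0
  have hge : ((Multiplicative.ofAdd (-1 : ℤ) : Multiplicative ℤ) :
      WithZero (Multiplicative ℤ)) ≤ v.intValuation Q := by
    rw [← hu] at hne2 ⊢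
    rw [WithZero.coe_le_coe] at hne2 ⊢
    rw [← ofAdd_toAdd u, Multiplicative.ofAdd_le] at hne2 ⊢
    omega
  refine ⟨hvP ▸ hge, ?_⟩
  rw [hvP]
  constructor
  · intro h
    refine hdvd1.mp ?_
    have := (hW 1).mp (by rw [h]; exact_mod_cast le_refl _)
    rwa [pow_one] at this
  · intro h
    refine le_antisymm ?_ hge
    have := (hW 1).mpr (by rw [pow_one]; exact hdvd1.mpr h)
    exact_mod_cast this
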